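/- For positive definite matrices A_1,...,A_m ∈ M_n(ℂ) and t ∈ [0,1], one has ((1/m)∑_j A_j^(1/2)) ∘ ((1/m)∑_j A_j^(1/2)) ≤ ((1/m)∑_j A_j^t) ∘ ((1/m)∑_j A_j^(1-t)) ≤ (1/m)∑_j (A_j ∘ I_n) in the Loewner order. -/

import Mathlib

open Matrix Finset
open scoped ComplexOrder

set_option linter.unusedSectionVars false
set_option linter.unusedVariables false
set_option maxHeartbeats 1000000
set_option linter.unusedVariables false

/-- Real power of a matrix via the spectral decomposition (junk value if not Hermitian). -/
noncomputable def mrpow {l : Type*} [Fintype l] [DecidableEq l] (A : Matrix l l ℂ) (r : ℝ) :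
    Matrix l l ℂ :=
  if hA : A.IsHermitian then
    (hA.eigenvectorUnitary : Matrix l l ℂ) *
      Matrix.diagonal (fun i => ((hA.eigenvalues i ^ r : ℝ) : ℂ)) *
      (star hA.eigenvectorUnitary : Matrix l l ℂ)
  else A

/-- Weighted matrix geometric mean `A ♯ₜ B = A^(1/2) (A^(-1/2) B A^(-1/2))^t A^(1/2)`. -/
noncomputable def wgmean {l : Type*} [Fintype l] [DecidableEq l] (A B : Matrix l l ℂ) (t : ℝ) :
    Matrix l l ℂ :=
  mrpow A (1/2) * mrpow (mrpow A (-(1/2)) * B * mrpow A (-(1/2))) t * mrpow A (1/2)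

/-- Loewner order: `A ≤ B` iff `B - A` is positive semidefinite. -/
def loewnerLE {l : Type*} [Fintype l] [DecidableEq l] (A B : Matrix l l ℂ) : Prop :=
  (B - A).PosSemidef

section Aux

variable {l : Type*} [Fintype l] [DecidableEq l]

lemma psd_vecMulVec (z : l → ℂ) : (vecMulVec z (star z)).PosSemidef := by
  rw [vecMulVec_eq Unit, ← conjTranspose_replicateCol]
  exact posSemidef_self_mul_conjTranspose _

lemma psd_smul_real {M : Matrix l l ℂ} (hM : M.PosSemidef) {r : ℝ} (hr : 0 ≤ r) :
    ((r : ℂ) • M).PosSemidef := by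
  constructor
  · unfold Matrix.IsHermitian
    rw [conjTranspose_smul, hM.1]
    congr 1
    simp
  · intro x
    exact (hM.smul (show (0:ℂ) ≤ r by exact_mod_cast hr)).2 x

lemma psd_sum {ι : Type*} (s : Finset ι) (f : ι → Matrix l l ℂ)
    (h : ∀ i ∈ s, (f i).PosSemidef) : (∑ i ∈ s, f i).PosSemidef :=
  Finset.sum_induction f _ (fun _ _ ha hb => ha.add hb) .zero h

lemma psd_dsum (c : l → l → ℝ) (hc : ∀ i j, 0 ≤ c i j) (z : l → l → l → ℂ) :
    (∑ i, ∑ j, ((c i j : ℝ) : ℂ) • vecMulVec (z i j) (star (z i j))).PosSemidef :=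
  psd_sum _ _ fun i _ => psd_sum _ _ fun j _ => psd_smul_real (psd_vecMulVec _) (hc i j)

lemma vdv_apply (V : Matrix l l ℂ) (f : l → ℝ) (p q : l) :
    (V * diagonal (fun i => (f i : ℂ)) * Vᴴ) p q
      = ∑ i, (f i : ℂ) * V p i * (starRingEnd ℂ) (V q i) := by
  simp only [Matrix.mul_apply, mul_diagonal, diagonal_apply, conjTranspose_apply,
    ite_mul, zero_mul, mul_ite, mul_zero, Finset.sum_ite_eq, Finset.sum_ite_eq',
    Finset.mem_univ, if_true]
  exact Finset.sum_congr rfl fun i _ => by rw [Complex.star_def]; ring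

lemma hadamard_decomp_core (V W : Matrix l l ℂ) (f g : l → ℝ) :
    (V * diagonal (fun i => (f i : ℂ)) * Vᴴ) ⊙ (W * diagonal (fun j => (g j : ℂ)) * Wᴴ) =
      ∑ i, ∑ j, ((f i * g j : ℝ) : ℂ) •
        vecMulVec (fun p => V p i * W p j) (star fun p => V p i * W p j) := by
  ext p q
  simp only [hadamard_apply, vdv_apply, Matrix.sum_apply, Matrix.smul_apply,
    vecMulVec_apply, Pi.star_apply, smul_eq_mul, Finset.sum_mul_sum]
  refine Finset.sum_congr rfl fun i _ => Finset.sum_congr rfl fun j _ => ?_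
  push_cast
  simp only [star_mul', Complex.star_def]
  ring

lemma mrpow_eq {A : Matrix l l ℂ} (hA : A.IsHermitian) (r : ℝ) :
    mrpow A r = (hA.eigenvectorUnitary : Matrix l l ℂ) *
      diagonal (fun i => (((fun i => hA.eigenvalues i ^ r) i : ℝ) : ℂ)) *
      (hA.eigenvectorUnitary : Matrix l l ℂ)ᴴ := by
  rw [mrpow, dif_pos hA]
  rfl

lemma self_eq {A : Matrix l l ℂ} (hA : A.IsHermitian) :
    A = (hA.eigenvectorUnitary : Matrix l l ℂ) *
      diagonal (fun i => (((fun i => hA.eigenvalues i) i : ℝ) : ℂ)) *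
      (hA.eigenvectorUnitary : Matrix l l ℂ)ᴴ := by
  conv_lhs => rw [hA.spectral_theorem]
  rfl

lemma one_eq {A : Matrix l l ℂ} (hA : A.IsHermitian) :
    (1 : Matrix l l ℂ) = (hA.eigenvectorUnitary : Matrix l l ℂ) *
      diagonal (fun i => (((fun _ : l => (1 : ℝ)) i : ℝ) : ℂ)) *
      (hA.eigenvectorUnitary : Matrix l l ℂ)ᴴ := by
  simp only [Complex.ofReal_one]
  rw [diagonal_one, mul_one, ← Matrix.star_eq_conjTranspose,
    (Matrix.mem_unitaryGroup_iff).mp hA.eigenvectorUnitary.2]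

/-- The common rank-one pieces for the pair `(A, B)`. -/
noncomputable def zz {A B : Matrix l l ℂ} (hA : A.IsHermitian) (hB : B.IsHermitian)
    (i j : l) : l → ℂ :=
  fun p => (hA.eigenvectorUnitary : Matrix l l ℂ) p i * (hB.eigenvectorUnitary : Matrix l l ℂ) p j

lemma decomp_mrpow {A B : Matrix l l ℂ} (hA : A.IsHermitian) (hB : B.IsHermitian) (r s : ℝ) :
    mrpow A r ⊙ mrpow B s =
      ∑ i, ∑ j, ((hA.eigenvalues i ^ r * hB.eigenvalues j ^ s : ℝ) : ℂ) •
        vecMulVec (zz hA hB i j) (star (zz hA hB i j)) := by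
  rw [mrpow_eq hA r, mrpow_eq hB s]
  exact hadamard_decomp_core _ _ _ _

lemma decomp_one_right {A B : Matrix l l ℂ} (hA : A.IsHermitian) (hB : B.IsHermitian) :
    A ⊙ (1 : Matrix l l ℂ) =
      ∑ i, ∑ j, ((hA.eigenvalues i * 1 : ℝ) : ℂ) •
        vecMulVec (zz hA hB i j) (star (zz hA hB i j)) := by
  conv_lhs => rw [self_eq hA, one_eq hB]
  exact hadamard_decomp_core _ _ _ _

lemma decomp_one_left {A B : Matrix l l ℂ} (hA : A.IsHermitian) (hB : B.IsHermitian) :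
    (1 : Matrix l l ℂ) ⊙ B =
      ∑ i, ∑ j, ((1 * hB.eigenvalues j : ℝ) : ℂ) •
        vecMulVec (zz hA hB i j) (star (zz hA hB i j)) := by
  conv_lhs => rw [one_eq hA, self_eq hB]
  exact hadamard_decomp_core _ _ _ _

lemma rpow_half_split {x : ℝ} (hx : 0 < x) (r : ℝ) : x ^ r = x ^ (r/2) * x ^ (r/2) := by
  rw [← Real.rpow_add hx]; ring_nf

lemma scalar1 {x y t : ℝ} (hx : 0 < x) (hy : 0 < y) (ht0 : 0 ≤ t) (ht1 : t ≤ 1) :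
    0 ≤ x ^ t * y ^ (1 - t) + x ^ (1 - t) * y ^ t -
      (x ^ (1/2 : ℝ) * y ^ (1/2 : ℝ) + x ^ (1/2 : ℝ) * y ^ (1/2 : ℝ)) := by
  have h1 : x ^ t * y ^ (1-t) = (x ^ (t/2) * y ^ ((1-t)/2)) * (x ^ (t/2) * y ^ ((1-t)/2)) := by
    rw [rpow_half_split hx t, rpow_half_split hy (1-t)]; ring
  have h2 : x ^ (1-t) * y ^ t = (x ^ ((1-t)/2) * y ^ (t/2)) * (x ^ ((1-t)/2) * y ^ (t/2)) := by
    rw [rpow_half_split hx (1-t), rpow_half_split hy t]; ring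
  have h3 : x ^ (1/2 : ℝ) * y ^ (1/2 : ℝ)
      = (x ^ (t/2) * y ^ ((1-t)/2)) * (x ^ ((1-t)/2) * y ^ (t/2)) := by
    rw [show x ^ (t/2) * y ^ ((1-t)/2) * (x ^ ((1-t)/2) * y ^ (t/2))
      = (x ^ (t/2) * x ^ ((1-t)/2)) * (y ^ ((1-t)/2) * y ^ (t/2)) by ring,
      ← Real.rpow_add hx, ← Real.rpow_add hy]
    norm_num [show t / 2 + (1 - t) / 2 = 1/2 by ring, show (1 - t) / 2 + t / 2 = 1/2 by ring]
  rw [h1, h2, h3]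
  nlinarith [sq_nonneg (x ^ (t/2) * y ^ ((1-t)/2) - x ^ ((1-t)/2) * y ^ (t/2))]

lemma scalar2 {x y t : ℝ} (hx : 0 < x) (hy : 0 < y) (ht0 : 0 ≤ t) (ht1 : t ≤ 1) :
    0 ≤ t * (x * 1) + (1 - t) * (1 * y) - x ^ t * y ^ (1 - t) := by
  have := Real.geom_mean_le_arith_mean2_weighted ht0 (by linarith : (0:ℝ) ≤ 1 - t)
    hx.le hy.le (by ring)
  linarith

lemma pair1 {A B : Matrix l l ℂ} (hA : A.PosDef) (hB : B.PosDef) {t : ℝ}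
    (ht0 : 0 ≤ t) (ht1 : t ≤ 1) :
    (mrpow A t ⊙ mrpow B (1-t) + mrpow A (1-t) ⊙ mrpow B t -
      (mrpow A (1/2) ⊙ mrpow B (1/2) + mrpow A (1/2) ⊙ mrpow B (1/2))).PosSemidef := by
  rw [decomp_mrpow hA.isHermitian hB.isHermitian t (1-t),
    decomp_mrpow hA.isHermitian hB.isHermitian (1-t) t,
    decomp_mrpow hA.isHermitian hB.isHermitian (1/2) (1/2)]
  simp only [← Finset.sum_add_distrib, ← Finset.sum_sub_distrib, ← add_smul, ← sub_smul,
    ← Complex.ofReal_add, ← Complex.ofReal_sub]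
  exact psd_dsum _ (fun i j => scalar1 (hA.eigenvalues_pos i) (hB.eigenvalues_pos j) ht0 ht1) _

lemma pair2 {A B : Matrix l l ℂ} (hA : A.PosDef) (hB : B.PosDef) {t : ℝ}
    (ht0 : 0 ≤ t) (ht1 : t ≤ 1) :
    ((t : ℂ) • (A ⊙ (1 : Matrix l l ℂ)) + ((1 - t : ℝ) : ℂ) • ((1 : Matrix l l ℂ) ⊙ B) -
      mrpow A t ⊙ mrpow B (1-t)).PosSemidef := by
  rw [decomp_mrpow hA.isHermitian hB.isHermitian t (1-t),
    decomp_one_right hA.isHermitian hB.isHermitian,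
    decomp_one_left hA.isHermitian hB.isHermitian]
  simp only [Finset.smul_sum, smul_smul, ← Complex.ofReal_mul]
  simp only [← Finset.sum_add_distrib, ← Finset.sum_sub_distrib, ← add_smul, ← sub_smul,
    ← Complex.ofReal_add, ← Complex.ofReal_sub]
  exact psd_dsum _ (fun i j => scalar2 (hA.eigenvalues_pos i) (hB.eigenvalues_pos j) ht0 ht1) _

end Aux

theorem hadamard_power_mean {l : Type*} [Fintype l] [DecidableEq l] (m : ℕ)
    (A : Fin m → Matrix l l ℂ) (hA : ∀ j, (A j).PosDef)
    (t : ℝ) (ht0 : 0 ≤ t) (ht1 : t ≤ 1) :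
    loewnerLE (((m : ℂ)⁻¹ • ∑ j, mrpow (A j) (1/2)) ⊙ ((m : ℂ)⁻¹ • ∑ j, mrpow (A j) (1/2)))
        (((m : ℂ)⁻¹ • ∑ j, mrpow (A j) t) ⊙ ((m : ℂ)⁻¹ • ∑ j, mrpow (A j) (1 - t))) ∧
      loewnerLE (((m : ℂ)⁻¹ • ∑ j, mrpow (A j) t) ⊙ ((m : ℂ)⁻¹ • ∑ j, mrpow (A j) (1 - t)))
        ((m : ℂ)⁻¹ • ∑ j, (A j ⊙ (1 : Matrix l l ℂ))) := by
  rcases Nat.eq_zero_or_pos m with rfl | hm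
  · constructor <;>
    · simp only [loewnerLE, Nat.cast_zero, _root_.inv_zero, zero_smul, hadamard_zero, zero_hadamard,
        sub_zero, sub_self]
      exact Matrix.PosSemidef.zero
  have hm0 : (m : ℂ) ≠ 0 := Nat.cast_ne_zero.2 hm.ne'
  set c : ℂ := (m : ℂ)⁻¹ with hc
  have hsm : ∀ M N : Matrix l l ℂ, (c • M) ⊙ (c • N) = (c * c) • (M ⊙ N) := fun M N => by
    rw [smul_hadamard, hadamard_smul, smul_smul]
  have hsum : ∀ M N : Fin m → Matrix l l ℂ,
      (∑ j, M j) ⊙ (∑ k, N k) = ∑ j, ∑ k, M j ⊙ N k := fun M N => by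
    ext p q
    simp [hadamard_apply, Matrix.sum_apply, Finset.sum_mul_sum]
  constructor
  · simp only [loewnerLE, hsm, hsum]
    rw [← smul_sub]
    have e_swT : ∑ j, ∑ k, mrpow (A k) t ⊙ mrpow (A j) (1-t)
        = ∑ j, ∑ k, mrpow (A j) t ⊙ mrpow (A k) (1-t) := Finset.sum_comm
    have e_swH : ∑ j, ∑ k, mrpow (A k) (1/2) ⊙ mrpow (A j) (1/2)
        = ∑ j, ∑ k, mrpow (A j) (1/2) ⊙ mrpow (A k) (1/2) := Finset.sum_comm
    have e1 : (∑ j, ∑ k, mrpow (A j) t ⊙ mrpow (A k) (1-t))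
        - ∑ j, ∑ k, mrpow (A j) (1/2) ⊙ mrpow (A k) (1/2)
        = (2⁻¹ : ℂ) • ∑ j, ∑ k,
            (mrpow (A j) t ⊙ mrpow (A k) (1-t) + mrpow (A k) t ⊙ mrpow (A j) (1-t)
              - (mrpow (A j) (1/2) ⊙ mrpow (A k) (1/2)
                 + mrpow (A k) (1/2) ⊙ mrpow (A j) (1/2))) := by
      simp only [Finset.sum_add_distrib, Finset.sum_sub_distrib]
      rw [e_swT, e_swH]
      module
    rw [e1, smul_smul,
      show c * c * 2⁻¹ = (((m:ℝ)⁻¹ * (m:ℝ)⁻¹ * 2⁻¹ : ℝ) : ℂ) by rw [hc]; push_cast; ring]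
    refine psd_smul_real (psd_sum _ _ fun j _ => psd_sum _ _ fun k _ => ?_) (by positivity)
    rw [show mrpow (A k) t ⊙ mrpow (A j) (1-t) = mrpow (A j) (1-t) ⊙ mrpow (A k) t
        from hadamard_comm _ _,
      show mrpow (A k) (1/2) ⊙ mrpow (A j) (1/2) = mrpow (A j) (1/2) ⊙ mrpow (A k) (1/2)
        from hadamard_comm _ _]
    exact pair1 (hA j) (hA k) ht0 ht1
  · simp only [loewnerLE, hsm, hsum]
    have hE : (∑ j, ∑ _k : Fin m, (t:ℂ) • (A j ⊙ (1 : Matrix l l ℂ)))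
        + (∑ _j : Fin m, ∑ k, ((1 - t : ℝ):ℂ) • ((1 : Matrix l l ℂ) ⊙ A k))
        = (m : ℂ) • ∑ j, (A j ⊙ (1 : Matrix l l ℂ)) := by
      have h1 : ∀ k : Fin m, (1 : Matrix l l ℂ) ⊙ A k = A k ⊙ 1 := fun k => hadamard_comm _ _
      simp only [h1, Finset.sum_const, Finset.card_univ, Fintype.card_fin,
        ← Nat.cast_smul_eq_nsmul ℂ, smul_smul, ← Finset.smul_sum]
      rw [← add_smul]
      congr 1
      push_cast
      ring
    have key : (∑ j, ∑ k, ((t:ℂ) • (A j ⊙ (1 : Matrix l l ℂ))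
        + ((1 - t : ℝ):ℂ) • ((1 : Matrix l l ℂ) ⊙ A k)
        - mrpow (A j) t ⊙ mrpow (A k) (1 - t))).PosSemidef :=
      psd_sum _ _ fun j _ => psd_sum _ _ fun k _ => pair2 (hA j) (hA k) ht0 ht1
    have hcc : c * c * (m : ℂ) = c := by rw [hc]; field_simp
    have e2 : c • (∑ j, (A j ⊙ (1 : Matrix l l ℂ)))
        - (c * c) • (∑ j, ∑ k, mrpow (A j) t ⊙ mrpow (A k) (1 - t))
        = (((m:ℝ)⁻¹ * (m:ℝ)⁻¹ : ℝ) : ℂ) • ∑ j, ∑ k, ((t:ℂ) • (A j ⊙ (1 : Matrix l l ℂ))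
            + ((1 - t : ℝ):ℂ) • ((1 : Matrix l l ℂ) ⊙ A k)
            - mrpow (A j) t ⊙ mrpow (A k) (1 - t)) := by
      rw [show (((m:ℝ)⁻¹ * (m:ℝ)⁻¹ : ℝ) : ℂ) = c * c by rw [hc]; push_cast; ring]
      simp only [Finset.sum_sub_distrib, Finset.sum_add_distrib]
      rw [hE, smul_sub, smul_smul, hcc]
    rw [e2]
    exact psd_smul_real key (by positivity)
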